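/- If A ⊆ {0,...,D} is finite, B ⊆ ℤ, and A ⊕ B = ℤ is a tiling, then B is periodic with some positive period at most 2^D. (Newman's bound.) -/

import Mathlib

/-- Newman's bound: if `A ⊆ {0,…,D}` tiles `ℤ` with complement `B`,
then `B` has a positive period at most `2^D`. -/
theorem stmt_19 (D : ℕ) (A : Finset ℕ) (hA : A ⊆ Finset.range (D + 1)) (B : Set ℤ)
    (htile : ∀ n : ℤ, ∃! p : ℕ × ℤ, p.1 ∈ A ∧ p.2 ∈ B ∧ (p.1 : ℤ) + p.2 = n) :
    ∃ t : ℤ, 0 < t ∧ t ≤ 2 ^ D ∧ ∀ n : ℤ, n ∈ B ↔ n + t ∈ B := by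
  classical
  -- reformulation: for each n, exactly one a ∈ A with n - a ∈ B
  have huniq : ∀ n : ℤ, ∃! a : ℕ, a ∈ A ∧ (n - (a:ℤ)) ∈ B := by
    intro n
    obtain ⟨p, ⟨hpA, hpB, hpe⟩, hp⟩ := htile n
    refine ⟨p.1, ⟨hpA, by rwa [show n - (p.1:ℤ) = p.2 by omega]⟩, ?_⟩
    rintro a ⟨haA, haB⟩
    have := hp (a, n - a) ⟨haA, haB, by ring⟩
    exact congrArg Prod.fst this
  have hAne : A.Nonempty := by
    obtain ⟨a, ⟨haA, _⟩, _⟩ := huniq 0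
    exact ⟨a, haA⟩
  have hAle : ∀ a ∈ A, a ≤ D := fun a ha => Nat.lt_succ_iff.mp (Finset.mem_range.mp (hA ha))
  rcases Nat.eq_zero_or_pos D with hD0 | hD
  · -- D = 0 : A = {0}, B = univ
    subst hD0
    have hA0 : ∀ a ∈ A, a = 0 := fun a ha => Nat.le_zero.mp (hAle a ha)
    refine ⟨1, one_pos, by norm_num, fun n => ?_⟩
    have hall : ∀ m : ℤ, m ∈ B := by
      intro m
      obtain ⟨a, ⟨haA, haB⟩, _⟩ := huniq m
      have : a = 0 := hA0 a haA
      simpa [this] using haB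
    simp [hall]
  set a0 := A.min' hAne with ha0def
  set a1 := A.max' hAne with ha1def
  have ha0A : a0 ∈ A := A.min'_mem hAne
  have ha1A : a1 ∈ A := A.max'_mem hAne
  -- forward determination
  have crit1 : ∀ n : ℤ, ((n + D) ∈ B ↔ ∀ a ∈ A, a ≠ a0 → (n + D + a0 - a) ∉ B) := by
    intro n
    obtain ⟨c, ⟨hcA, hcB⟩, hc⟩ := huniq (n + D + a0)
    constructor
    · intro hnD a haA hane haB
      have h1 : a = c := hc a ⟨haA, haB⟩
      have h2 : a0 = c := hc a0 ⟨ha0A, by rwa [show n + (D:ℤ) + a0 - a0 = n + D by ring]⟩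
      exact hane (h1.trans h2.symm)
    · intro h
      by_cases hc0 : c = a0
      · rw [hc0] at hcB
        rwa [show n + (D:ℤ) + a0 - a0 = n + D by ring] at hcB
      · exact absurd hcB (h c hcA hc0)
  have crit2 : ∀ n : ℤ, (n ∈ B ↔ ∀ a ∈ A, a ≠ a1 → (n + a1 - a) ∉ B) := by
    intro n
    obtain ⟨c, ⟨hcA, hcB⟩, hc⟩ := huniq (n + a1)
    constructor
    · intro hn a haA hane haB
      have h1 : a = c := hc a ⟨haA, haB⟩
      have h2 : a1 = c := hc a1 ⟨ha1A, by rwa [show n + (a1:ℤ) - a1 = n by ring]⟩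
      exact hane (h1.trans h2.symm)
    · intro h
      by_cases hc1 : c = a1
      · rw [hc1] at hcB
        rwa [show n + (a1:ℤ) - a1 = n by ring] at hcB
      · exact absurd hcB (h c hcA hc1)
  have fwd : ∀ n m : ℤ, (∀ i : ℕ, i < D → ((n + i) ∈ B ↔ (m + i) ∈ B)) →
      ((n + D) ∈ B ↔ (m + D) ∈ B) := by
    intro n m hw
    rw [crit1 n, crit1 m]
    constructor <;> intro h a haA hane
    · have ha0 : a0 ≤ a := A.min'_le a haA
      have haD : a ≤ D := hAle a haA
      have hlt : a0 < a := lt_of_le_of_ne ha0 (Ne.symm hane)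
      have key := hw (D + a0 - a) (by omega)
      rw [show (m:ℤ) + (D + a0 - a : ℕ) = m + D + a0 - a by push_cast; omega] at key
      rw [show (n:ℤ) + (D + a0 - a : ℕ) = n + D + a0 - a by push_cast; omega] at key
      exact fun hb => h a haA hane (key.mpr hb)
    · have ha0 : a0 ≤ a := A.min'_le a haA
      have haD : a ≤ D := hAle a haA
      have hlt : a0 < a := lt_of_le_of_ne ha0 (Ne.symm hane)
      have key := hw (D + a0 - a) (by omega)
      rw [show (m:ℤ) + (D + a0 - a : ℕ) = m + D + a0 - a by push_cast; omega] at key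
      rw [show (n:ℤ) + (D + a0 - a : ℕ) = n + D + a0 - a by push_cast; omega] at key
      exact fun hb => h a haA hane (key.mp hb)
  have bwd : ∀ n m : ℤ, (∀ i : ℕ, i < D → ((n + 1 + i) ∈ B ↔ (m + 1 + i) ∈ B)) →
      (n ∈ B ↔ m ∈ B) := by
    intro n m hw
    rw [crit2 n, crit2 m]
    constructor <;> intro h a haA hane
    · have ha1 : a ≤ a1 := A.le_max' a haA
      have haD : a1 ≤ D := hAle a1 ha1A
      have hlt : a < a1 := lt_of_le_of_ne ha1 hane
      have key := hw (a1 - a - 1) (by omega)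
      rw [show (m:ℤ) + 1 + (a1 - a - 1 : ℕ) = m + a1 - a by push_cast; omega] at key
      rw [show (n:ℤ) + 1 + (a1 - a - 1 : ℕ) = n + a1 - a by push_cast; omega] at key
      exact fun hb => h a haA hane (key.mpr hb)
    · have ha1 : a ≤ a1 := A.le_max' a haA
      have haD : a1 ≤ D := hAle a1 ha1A
      have hlt : a < a1 := lt_of_le_of_ne ha1 hane
      have key := hw (a1 - a - 1) (by omega)
      rw [show (m:ℤ) + 1 + (a1 - a - 1 : ℕ) = m + a1 - a by push_cast; omega] at key
      rw [show (n:ℤ) + 1 + (a1 - a - 1 : ℕ) = n + a1 - a by push_cast; omega] at key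
      exact fun hb => h a haA hane (key.mp hb)
  -- pigeonhole on windows
  have hpig : ∃ k1 k2 : ℕ, k1 < k2 ∧ k2 ≤ 2 ^ D ∧
      ∀ i : ℕ, i < D → (((k1:ℤ) + i) ∈ B ↔ ((k2:ℤ) + i) ∈ B) := by
    set f : ℕ → (Fin D → Bool) := fun k i => decide (((k:ℤ) + (i:ℕ)) ∈ B) with hf
    have hcard : (Finset.univ : Finset (Fin D → Bool)).card < (Finset.range (2 ^ D + 1)).card := by
      simp [Finset.card_univ]
    obtain ⟨k1, hk1, k2, hk2, hne, hfe⟩ :=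
      Finset.exists_ne_map_eq_of_card_lt_of_maps_to hcard
        (fun k _ => Finset.mem_univ (f k))
    rcases lt_or_gt_of_ne hne with hlt | hlt
    · refine ⟨k1, k2, hlt, by simpa using Nat.lt_succ_iff.mp (Finset.mem_range.mp hk2), ?_⟩
      intro i hi
      have := congrFun hfe ⟨i, hi⟩
      simpa [hf] using this
    · refine ⟨k2, k1, hlt, by simpa using Nat.lt_succ_iff.mp (Finset.mem_range.mp hk1), ?_⟩
      intro i hi
      have := congrFun hfe ⟨i, hi⟩
      simpa [hf] using this.symm
  obtain ⟨k1, k2, hk12, hk2le, hwin⟩ := hpig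
  set t : ℤ := (k2 : ℤ) - k1 with htdef
  have ht0 : 0 < t := by rw [htdef]; omega
  have htle : t ≤ 2 ^ D := by
    have h2 : (k2:ℤ) ≤ 2 ^ D := by exact_mod_cast hk2le
    have h1 : (0:ℤ) ≤ k1 := Int.natCast_nonneg k1
    rw [htdef]; linarith
  have base : ∀ i : ℕ, i < D → (((k1:ℤ) + i) ∈ B ↔ ((k1:ℤ) + i + t) ∈ B) := by
    intro i hi
    rw [show (k1:ℤ) + i + t = (k2:ℤ) + i by rw [htdef]; ring]
    exact hwin i hi
  have step : ∀ n : ℤ, (∀ i : ℕ, i < D → ((n + i) ∈ B ↔ (n + i + t) ∈ B)) →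
      ∀ i : ℕ, i < D → ((n + 1 + i) ∈ B ↔ (n + 1 + i + t) ∈ B) := by
    intro n hn i hi
    rcases Nat.lt_or_ge (i + 1) D with h | h
    · have h2 := hn (i + 1) h
      rw [show (n:ℤ) + ((i + 1 : ℕ) : ℤ) = n + 1 + i by push_cast; ring] at h2
      exact h2
    · have hfwd := fwd n (n + t) (fun j hj => by
        have h3 := hn j hj
        rwa [show n + (j:ℤ) + t = n + t + j by ring] at h3)
      rw [show (n:ℤ) + 1 + i = n + D by omega]
      rwa [show n + (D:ℤ) + t = n + t + D by ring]
  have backstep : ∀ n : ℤ, (∀ i : ℕ, i < D → ((n + i) ∈ B ↔ (n + i + t) ∈ B)) →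
      ∀ i : ℕ, i < D → ((n - 1 + i) ∈ B ↔ (n - 1 + i + t) ∈ B) := by
    intro n hn i hi
    rcases Nat.eq_zero_or_pos i with h0 | h0
    · subst h0
      have hbwd := bwd (n - 1) (n - 1 + t) (fun j hj => by
        have h3 := hn j hj
        rw [show n - 1 + 1 + (j:ℤ) = n + j by ring,
            show n - 1 + t + 1 + (j:ℤ) = n + j + t by ring]
        exact h3)
      simpa using hbwd
    · have h2 := hn (i - 1) (by omega)
      rw [show (n:ℤ) + ((i - 1 : ℕ) : ℤ) = n - 1 + i by omega] at h2
      exact h2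
  have main : ∀ m : ℤ, ∀ i : ℕ, i < D → (((k1:ℤ) + m + i) ∈ B ↔ ((k1:ℤ) + m + i + t) ∈ B) := by
    intro m
    induction m using Int.induction_on with
    | zero =>
      intro i hi
      rw [show (k1:ℤ) + 0 + i = (k1:ℤ) + i by ring]
      exact base i hi
    | succ k ih =>
      intro i hi
      have h2 := step ((k1:ℤ) + k) ih i hi
      rwa [show (k1:ℤ) + k + 1 + i = (k1:ℤ) + ((k:ℤ) + 1) + i by ring] at h2
    | pred k ih =>
      intro i hi
      have h2 := backstep ((k1:ℤ) + -k) ih i hi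
      rwa [show (k1:ℤ) + -(k:ℤ) - 1 + i = (k1:ℤ) + (-(k:ℤ) - 1) + i by ring] at h2
  refine ⟨t, ht0, htle, fun n => ?_⟩
  have h2 := main (n - k1) 0 hD
  rw [show (k1:ℤ) + (n - k1) + ((0:ℕ):ℤ) = n by push_cast; ring] at h2
  exact h2
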